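/- arXiv:2303.15079 — 2 statements merged into one kernel-verified Lean document; each statement's English description precedes it below -/
import Mathlib

section
/- Let η, μ : (0,∞) → R be positive functions satisfying (rη')' = ((r² + (n/2−1)²)/r) η and (rμ')' = ((r² + (n/2)²)/r) μ, with r(ημ' − μη') → 0 as r → 0⁺. Then for every r > 0, μ'(r)/μ(r) − η'(r)/η(r) = (n−1)/(r η(r) μ(r)) · ∫₀^r η(s)μ(s)/s ds > 0; in particular the ratio η(r)/μ(r) is strictly decreasing on (0,∞). -/
open MeasureTheory

/-- Wronskian-type monotonicity: if `η, μ > 0` satisfy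
`(rη')' = ((r² + (n/2−1)²)/r) η` and `(rμ')' = ((r² + (n/2)²)/r) μ` with
`r(ημ' − μη') → 0` as `r → 0⁺`, then
`μ'/μ − η'/η = (n−1)/(rημ) ∫₀^r ημ/s ds > 0`, and `η/μ` is strictly decreasing on `(0,∞)`. -/
theorem wronskian_monotonicity (n : ℕ) (hn : 2 ≤ n) (η μ : ℝ → ℝ)
    (hηpos : ∀ r > (0:ℝ), 0 < η r) (hμpos : ∀ r > (0:ℝ), 0 < μ r)
    (hη' : ∀ r > (0:ℝ), HasDerivAt η (deriv η r) r)
    (hμ' : ∀ r > (0:ℝ), HasDerivAt μ (deriv μ r) r)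
    (hηSL : ∀ r > (0:ℝ), HasDerivAt (fun s : ℝ => s * deriv η s)
      ((r ^ 2 + ((n:ℝ)/2 - 1) ^ 2) / r * η r) r)
    (hμSL : ∀ r > (0:ℝ), HasDerivAt (fun s : ℝ => s * deriv μ s)
      ((r ^ 2 + ((n:ℝ)/2) ^ 2) / r * μ r) r)
    (hint : ∀ r > (0:ℝ), IntegrableOn (fun s => η s * μ s / s) (Set.Ioc 0 r))
    (hlim : Filter.Tendsto (fun r => r * (η r * deriv μ r - μ r * deriv η r))
      (nhdsWithin 0 (Set.Ioi 0)) (nhds 0)) :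
    (∀ r > (0:ℝ),
      deriv μ r / μ r - deriv η r / η r =
        ((n:ℝ) - 1) / (r * η r * μ r) * ∫ s in Set.Ioc (0:ℝ) r, η s * μ s / s ∧
      0 < deriv μ r / μ r - deriv η r / η r) ∧
    StrictAntiOn (fun r => η r / μ r) (Set.Ioi 0) := by
  have hn1 : (0:ℝ) < (n:ℝ) - 1 := by
    have : (2:ℝ) ≤ n := by exact_mod_cast hn
    linarith
  set g : ℝ → ℝ := fun s => η s * μ s / s with hgdef
  set W : ℝ → ℝ := fun r => r * (η r * deriv μ r - μ r * deriv η r) with hWdef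
  -- derivative of W
  have hWderiv : ∀ x > (0:ℝ), HasDerivAt W (((n:ℝ) - 1) * g x) x := by
    intro x hx
    have hW2 : W = fun r => η r * (r * deriv μ r) - μ r * (r * deriv η r) := by
      funext r; simp only [hWdef]; ring
    rw [hW2]
    have h := ((hη' x hx).mul (hμSL x hx)).sub ((hμ' x hx).mul (hηSL x hx))
    refine h.congr_deriv ?_
    have hx' : x ≠ 0 := ne_of_gt hx
    simp only [hgdef]
    field_simp
    ring
  -- key identity
  have key : ∀ r > (0:ℝ), W r = ((n:ℝ) - 1) * ∫ s in Set.Ioc (0:ℝ) r, g s := by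
    intro r hr
    set F : ℝ → ℝ := fun a => ∫ s in Set.Ioc (0:ℝ) a, g s with hFdef
    -- interval integrability of (n-1)*g on subintervals of (0, r]
    have hii : ∀ a ∈ Set.Ioc (0:ℝ) r, IntervalIntegrable (fun s => ((n:ℝ)-1) * g s) volume a r := by
      intro a ha
      rw [intervalIntegrable_iff_integrableOn_Ioc_of_le ha.2]
      exact ((hint r hr).mono_set (Set.Ioc_subset_Ioc_left ha.1.le)).const_mul _
    -- FTC on [a, r]
    have hstep : ∀ a ∈ Set.Ioo (0:ℝ) r, W a = W r - (((n:ℝ)-1) * (F r - F a)) := by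
      intro a ha
      have hFTC : ∫ s in a..r, ((n:ℝ)-1) * g s = W r - W a := by
        apply intervalIntegral.integral_eq_sub_of_hasDerivAt
        · intro x hx
          rw [Set.uIcc_of_le ha.2.le] at hx
          exact hWderiv x (lt_of_lt_of_le ha.1 hx.1)
        · exact hii a ⟨ha.1, ha.2.le⟩
      have hsplit : ∫ s in a..r, ((n:ℝ)-1) * g s = ((n:ℝ)-1) * (F r - F a) := by
        rw [intervalIntegral.integral_of_le ha.2.le, MeasureTheory.integral_const_mul]
        have : F r - F a = ∫ s in Set.Ioc a r, g s := by
          have h1 : IntervalIntegrable g volume 0 r := by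
            rw [intervalIntegrable_iff_integrableOn_Ioc_of_le hr.le]; exact hint r hr
          have h2 : IntervalIntegrable g volume 0 a := by
            rw [intervalIntegrable_iff_integrableOn_Ioc_of_le ha.1.le]
            exact (hint r hr).mono_set (Set.Ioc_subset_Ioc_right ha.2.le)
          have := intervalIntegral.integral_interval_sub_left h1 h2
          rw [intervalIntegral.integral_of_le hr.le, intervalIntegral.integral_of_le ha.1.le,
            intervalIntegral.integral_of_le ha.2.le] at this
          exact this
        rw [this]
      linarith [hFTC.symm.trans hsplit]
    -- limits as a → 0⁺
    have hF0 : Filter.Tendsto F (nhdsWithin 0 (Set.Ioi 0)) (nhds 0) := by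
      have hint' : IntegrableOn g (Set.Icc 0 r) := by
        rw [integrableOn_Icc_iff_integrableOn_Ioc]
        exact hint r hr
      have hcont := intervalIntegral.continuousOn_primitive (f := g) (a := (0:ℝ)) (b := r) hint'
      have h0 : (0:ℝ) ∈ Set.Icc (0:ℝ) r := ⟨le_refl _, hr.le⟩
      have := (hcont 0 h0)
      have hF00 : F 0 = 0 := by simp [hFdef]
      rw [ContinuousWithinAt] at this
      have hle : nhdsWithin (0:ℝ) (Set.Ioi 0) ≤ nhdsWithin 0 (Set.Icc 0 r) := by
        rw [← nhdsWithin_Ioo_eq_nhdsGT hr]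
        exact nhdsWithin_mono _ Set.Ioo_subset_Icc_self
      have := this.mono_left hle
      simpa [hF00] using this
    have hWlim : Filter.Tendsto W (nhdsWithin 0 (Set.Ioi 0)) (nhds (W r - ((n:ℝ)-1) * F r)) := by
      have h1 : Filter.Tendsto (fun a => W r - (((n:ℝ)-1) * (F r - F a)))
          (nhdsWithin 0 (Set.Ioi 0)) (nhds (W r - ((n:ℝ)-1) * (F r - 0))) :=
        Filter.Tendsto.const_sub _ (Filter.Tendsto.const_mul _
          (Filter.Tendsto.const_sub _ hF0))
      have heq : ∀ᶠ a in nhdsWithin (0:ℝ) (Set.Ioi 0),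
          W a = W r - (((n:ℝ)-1) * (F r - F a)) := by
        have hmem : Set.Ioo (0:ℝ) r ∈ nhdsWithin (0:ℝ) (Set.Ioi 0) := by
          rw [← nhdsWithin_Ioo_eq_nhdsGT hr]
          exact self_mem_nhdsWithin
        filter_upwards [hmem] with a ha
        exact hstep a ha
      have := h1.congr' (by filter_upwards [heq] with a ha using ha.symm)
      simpa using this
    have h0 := tendsto_nhds_unique hWlim hlim
    have : W r - ((n:ℝ)-1) * F r = 0 := h0
    linarith
  -- positivity of the integral
  have hIpos : ∀ r > (0:ℝ), 0 < ∫ s in Set.Ioc (0:ℝ) r, g s := by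
    intro r hr
    have hae : 0 ≤ᵐ[volume.restrict (Set.Ioc (0:ℝ) r)] g :=
      (MeasureTheory.ae_restrict_iff' measurableSet_Ioc).mpr (Filter.Eventually.of_forall
        fun s hs => le_of_lt (div_pos (mul_pos (hηpos s hs.1) (hμpos s hs.1)) hs.1))
    rw [MeasureTheory.setIntegral_pos_iff_support_of_nonneg_ae hae (hint r hr)]
    have hsub : Set.Ioc (0:ℝ) r ⊆ Function.support g ∩ Set.Ioc 0 r := by
      intro s hs
      refine ⟨?_, hs⟩
      exact ne_of_gt (div_pos (mul_pos (hηpos s hs.1) (hμpos s hs.1)) hs.1)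
    calc (0:ENNReal) < volume (Set.Ioc (0:ℝ) r) := by
          rw [Real.volume_Ioc]; simp [hr]
      _ ≤ volume (Function.support g ∩ Set.Ioc 0 r) := measure_mono hsub
  -- the main pointwise statement
  have main : ∀ r > (0:ℝ),
      deriv μ r / μ r - deriv η r / η r =
        ((n:ℝ) - 1) / (r * η r * μ r) * ∫ s in Set.Ioc (0:ℝ) r, g s ∧
      0 < deriv μ r / μ r - deriv η r / η r := by
    intro r hr
    have hη0 := hηpos r hr
    have hμ0 := hμpos r hr
    have hkey := key r hr
    have heq : deriv μ r / μ r - deriv η r / η r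
        = ((n:ℝ) - 1) / (r * η r * μ r) * ∫ s in Set.Ioc (0:ℝ) r, g s := by
      rw [div_mul_eq_mul_div, ← hkey, hWdef]
      field_simp
    refine ⟨heq, ?_⟩
    rw [heq]
    exact mul_pos (div_pos hn1 (by positivity)) (hIpos r hr)
  refine ⟨main, ?_⟩
  -- strict antitonicity of η/μ
  apply strictAntiOn_of_deriv_neg (convex_Ioi (0:ℝ))
  · intro x hx
    exact ((hη' x hx).div (hμ' x hx) (ne_of_gt (hμpos x hx))).continuousAt.continuousWithinAt
  · intro x hx
    rw [interior_Ioi] at hx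
    have hη0 := hηpos x hx
    have hμ0 := hμpos x hx
    have hd := (hη' x hx).div (hμ' x hx) (ne_of_gt hμ0)
    rw [show (fun r => η r / μ r) = η / μ from rfl, hd.deriv]
    have hpos := (main x hx).2
    have hnum : 0 < deriv μ x * η x - μ x * deriv η x := by
      have : deriv μ x / μ x - deriv η x / η x
          = (deriv μ x * η x - μ x * deriv η x) / (μ x * η x) :=
        div_sub_div _ _ (ne_of_gt hμ0) (ne_of_gt hη0)
      rw [this] at hpos
      exact (div_pos_iff.mp hpos).resolve_right (fun h => absurd h.2 (not_lt.mpr (le_of_lt (mul_pos hμ0 hη0)))) |>.1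
    have : deriv η x * μ x - η x * deriv μ x < 0 := by linarith [hnum]
    exact div_neg_of_neg_of_pos this (by positivity)
end

section
/- Let n ≥ 2, η, μ : (0,∞) → R be positive functions satisfying η'(r) = (n/2−1)η(r)/r + μ(r) and μ'(r) = −(n/2)μ(r)/r + η(r), and define ζ(r) = 2r²μ(r)² + 2(n−1)r η(r)μ(r) + (n+1−2r²) η(r)². Then r ζ'(r) = ζ(r) + 4r η(r)μ(r) + (n²−2n−3) η(r)² for all r > 0. -/
/-- Key differential identity of Lemma 3.4: if `η, μ > 0` satisfy
`η' = (n/2−1)η/r + μ` and `μ' = −(n/2)μ/r + η` on `(0,∞)`, and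
`ζ(r) = 2r²μ(r)² + 2(n−1)r η(r)μ(r) + (n+1−2r²) η(r)²`, then
`r ζ'(r) = ζ(r) + 4r η(r)μ(r) + (n²−2n−3) η(r)²` for all `r > 0`. -/
theorem zeta_differential_identity (n : ℕ) (hn : 2 ≤ n) (η μ ζ : ℝ → ℝ)
    (hηpos : ∀ r > (0:ℝ), 0 < η r) (hμpos : ∀ r > (0:ℝ), 0 < μ r)
    (hη' : ∀ r > (0:ℝ), HasDerivAt η (((n:ℝ)/2 - 1) * η r / r + μ r) r)
    (hμ' : ∀ r > (0:ℝ), HasDerivAt μ (-((n:ℝ)/2) * μ r / r + η r) r)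
    (hζ : ∀ r : ℝ, ζ r = 2 * r ^ 2 * μ r ^ 2 + 2 * ((n:ℝ) - 1) * r * η r * μ r +
      ((n:ℝ) + 1 - 2 * r ^ 2) * η r ^ 2) :
    ∀ r > (0:ℝ),
      r * deriv ζ r = ζ r + 4 * r * η r * μ r + ((n:ℝ) ^ 2 - 2 * n - 3) * η r ^ 2 := by
  have hzeq : ζ = fun r => 2 * r ^ 2 * μ r ^ 2 + 2 * ((n:ℝ) - 1) * r * η r * μ r +
      ((n:ℝ) + 1 - 2 * r ^ 2) * η r ^ 2 := funext hζ
  intro r hr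
  have hη := hη' r hr
  have hμ := hμ' r hr
  have hid : HasDerivAt (fun r : ℝ => r) (1:ℝ) r := hasDerivAt_id' r
  have hr2 : HasDerivAt (fun r : ℝ => r ^ 2) (2 * r) r := by
    simpa using hasDerivAt_pow 2 r
  have H := (((hr2.const_mul 2).mul (hμ.pow 2)).add
      (((hid.const_mul (2*((n:ℝ)-1))).mul hη).mul hμ)).add
      (((hasDerivAt_const r ((n:ℝ)+1)).sub (hr2.const_mul 2)).mul (hη.pow 2))
  rw [hzeq, (show HasDerivAt (fun r : ℝ => 2 * r ^ 2 * μ r ^ 2 + 2 * ((n:ℝ) - 1) * r * η r * μ r +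
      ((n:ℝ) + 1 - 2 * r ^ 2) * η r ^ 2) _ r from H).deriv]
  beta_reduce
  simp only [Pi.mul_apply, Pi.pow_apply, Pi.sub_apply]
  push_cast
  field_simp
  ring
end
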